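/- arXiv:1703.08934 — 5 statements merged into one kernel-verified Lean document; each statement's English description precedes it below -/
import Mathlib

section
/- The map f ↦ Γ(f) restricted to asymptotic evolution functions on M is a bijection onto the set of grid graphs over M; that is, for any grid graph Γ over M there is a unique asymptotic evolution function f with Γ(f) = Γ. -/
/-!
Common setup: multilevel discrete networks (Faure–Kaji, "A circuit-preserving
mapping from multilevel to Boolean dynamics").

A gene `i` takes levels in `{0,...,b i}`, encoded as `Fin (b i + 1)`.
The Boolean case is `b i = 1`.
-/

namespace GRN

section Generic

variable {ι : Type*} [Fintype ι] [DecidableEq ι] (b : ι → ℕ)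

/-- the state space `∏ i {0,…,b i}` -/
abbrev GState := ∀ i : ι, Fin (b i + 1)

/-- L¹ distance between states -/
def dist1 (x x' : GState b) : ℕ := ∑ i, Nat.dist (x i : ℕ) (x' i : ℕ)

/-- edge relation of the asynchronous state transition graph `Γ(f)` -/
def stgEdge (f : GState b → GState b) (x x' : GState b) : Prop :=
  ∃ j : ι, (∀ k, k ≠ j → x' k = x k) ∧
    (((x j : ℕ) < (f x j : ℕ) ∧ (x' j : ℕ) = (x j : ℕ) + 1) ∨
     ((f x j : ℕ) < (x j : ℕ) ∧ (x' j : ℕ) + 1 = (x j : ℕ)))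

/-- a grid graph: every edge joins states at distance one, and there are no
two parallel outward edges at any vertex -/
def IsGridGraph (E : GState b → GState b → Prop) : Prop :=
  (∀ x x', E x x' → dist1 b x x' = 1) ∧
  (∀ (x x' x'' : GState b) (j : ι), E x x' → E x x'' →
    (∀ k, k ≠ j → x' k = x k) → (∀ k, k ≠ j → x'' k = x k) → x' = x'')

/-- asymptotic evolution function: `f i x ∈ {0, x i, b i}` -/
def Asymptotic (f : GState b → GState b) : Prop :=
  ∀ (x : GState b) (i : ι), (f x i : ℕ) = 0 ∨ f x i = x i ∨ (f x i : ℕ) = b i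

/-- stepwise (unitary) evolution function: `|f i x - x i| ≤ 1` -/
def Stepwise (f : GState b → GState b) : Prop :=
  ∀ (x : GState b) (i : ι), (f x i : ℕ) ≤ (x i : ℕ) + 1 ∧ (x i : ℕ) ≤ (f x i : ℕ) + 1

/-- the asymptotic function `f̄` associated with `f` -/
def asym (f : GState b → GState b) : GState b → GState b := fun x i =>
  if (x i : ℕ) < (f x i : ℕ) then Fin.last (b i)
  else if (f x i : ℕ) < (x i : ℕ) then 0 else x i

/-- the stepwise function `f̂` associated with `f` -/
def stepw (f : GState b → GState b) : GState b → GState b := fun x i =>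
  if h : (x i : ℕ) < (f x i : ℕ) then ⟨(x i : ℕ) + 1, Nat.lt_of_le_of_lt h (f x i).isLt⟩
  else if (f x i : ℕ) < (x i : ℕ) then
    ⟨(x i : ℕ) - 1, lt_of_le_of_lt (Nat.sub_le _ _) (x i).isLt⟩
  else x i

/-- `x + e j` (defined when `x j < b j`) -/
def bump (x : GState b) (j : ι) (h : (x j : ℕ) < b j) : GState b :=
  Function.update x j ⟨(x j : ℕ) + 1, Nat.succ_lt_succ h⟩

/-- `x - e j` -/
def drop (x : GState b) (j : ι) : GState b :=
  Function.update x j ⟨(x j : ℕ) - 1, lt_of_le_of_lt (Nat.sub_le _ _) (x j).isLt⟩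

/-- positive edge `j → i` in the local interaction graph `Gf(x)`:
`∂⁺ⱼfᵢ(x) > 0` or `∂⁻ⱼfᵢ(x) > 0` -/
def PosEdge (f : GState b → GState b) (x : GState b) (j i : ι) : Prop :=
  (∃ h : (x j : ℕ) < b j, (f x i : ℕ) < (f (bump b x j h) i : ℕ)) ∨
  (0 < (x j : ℕ) ∧ (f (drop b x j) i : ℕ) < (f x i : ℕ))

/-- negative edge `j → i` in the local interaction graph `Gf(x)` -/
def NegEdge (f : GState b → GState b) (x : GState b) (j i : ι) : Prop :=
  (∃ h : (x j : ℕ) < b j, (f (bump b x j h) i : ℕ) < (f x i : ℕ)) ∨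
  (0 < (x j : ℕ) ∧ (f x i : ℕ) < (f (drop b x j) i : ℕ))

/-- an edge with sign `s` (`true` = negative) -/
def SignedEdge (f : GState b → GState b) (x : GState b) (s : Bool) (j i : ι) : Prop :=
  if s then NegEdge b f x j i else PosEdge b f x j i

/-- a type-1 functional circuit at `x`, negative iff `neg`: a cycle (with
pairwise-distinct vertices) in the local interaction graph `Gf(x)` whose number
of negative edges is odd iff `neg` -/
def HasType1Circuit (f : GState b → GState b) (x : GState b) (neg : Bool) : Prop :=
  ∃ (k : ℕ) (v : Fin (k + 1) → ι) (s : Fin (k + 1) → Bool),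
    Function.Injective v ∧
    (∀ t, SignedEdge b f x (s t) (v t) (v (t + 1))) ∧
    (Odd (Finset.univ.filter fun t => s t = true).card ↔ neg = true)

/-- mutual reachability -/
def InSameSCC (E : GState b → GState b → Prop) (x y : GState b) : Prop :=
  Relation.ReflTransGen E x y ∧ Relation.ReflTransGen E y x

/-- the strongly connected component of `x` -/
def sccOf (E : GState b → GState b → Prop) (x : GState b) : Set (GState b) :=
  {y | InSameSCC b E x y}

/-- attractor: terminal strongly connected set of states -/
def IsAttractor (E : GState b → GState b → Prop) (A : Set (GState b)) : Prop :=
  A.Nonempty ∧ (∀ x ∈ A, ∀ y ∈ A, Relation.ReflTransGen E x y) ∧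
  (∀ x ∈ A, ∀ y, E x y → y ∈ A)

/-- stable state: no outgoing edges -/
def IsStable (E : GState b → GState b → Prop) (x : GState b) : Prop :=
  ∀ y, ¬ E x y

end Generic

section Binarisation

variable {n : ℕ} {m : Fin n → ℕ}

/-- index set of the Boolean state space `𝔹^(m₁+⋯+mₙ)` -/
abbrev BIdx (m : Fin n → ℕ) := Σ i : Fin n, Fin (m i)

/-- all maximal levels equal to 1 -/
abbrev bOne (m : Fin n → ℕ) : BIdx m → ℕ := fun _ => 1

/-- the Boolean state space `𝔹^(m₁+⋯+mₙ)` -/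
abbrev BState (m : Fin n → ℕ) := GState (bOne m)

/-- the surjection `ψ : 𝔹^(m₁+⋯+mₙ) → M`, counting ones in each block -/
def psi (x : BState m) : GState m := fun i =>
  ⟨∑ j : Fin (m i), (x ⟨i, j⟩ : ℕ), Nat.lt_succ_of_le (by
    calc ∑ j : Fin (m i), (x ⟨i, j⟩ : ℕ) ≤ ∑ _j : Fin (m i), 1 :=
          Finset.sum_le_sum (fun j _ => Nat.lt_succ_iff.mp (x ⟨i, j⟩).isLt)
      _ = m i := by simp)⟩

/-- Van Ham's embedding `b₀ : M → 𝔹^(m₁+⋯+mₙ)`: level `k` ↦ `k` ones then zeros -/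
def vanHam (y : GState m) : BState m := fun p =>
  if (p.2 : ℕ) < (y p.1 : ℕ) then 1 else 0

/-- the binarisation `𝔹(f)` of an (asymptotic) evolution function `f` -/
def binf (f : GState m → GState m) : BState m → BState m := fun x p =>
  if (psi x p.1 : ℕ) < (f (psi x) p.1 : ℕ) then 1
  else if (f (psi x) p.1 : ℕ) < (psi x p.1 : ℕ) then 0
  else x p

/-- the binarisation `𝔹(Γ)` of a grid graph over `M`:
edge `x → x'` iff `d(x,x') = 1` and `ψ(x) → ψ(x')` in `Γ` -/
def binGraph (E : GState m → GState m → Prop) : BState m → BState m → Prop :=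
  fun x x' => dist1 (bOne m) x x' = 1 ∧ E (psi x) (psi x')

/-- the action of `𝕊 = ∏ᵢ S_{mᵢ}` on `𝔹^(m₁+⋯+mₙ)` permuting blocks coordinatewise -/
def act (σ : ∀ i : Fin n, Equiv.Perm (Fin (m i))) (x : BState m) : BState m :=
  fun p => x ⟨p.1, σ p.1 p.2⟩

/-- `𝕊`-symmetric Boolean evolution function -/
def SSym (g : BState m → BState m) : Prop :=
  ∀ (σ : ∀ i : Fin n, Equiv.Perm (Fin (m i))) (x : BState m) (p : BIdx m),
    g (act σ x) p = g x ⟨p.1, σ p.1 p.2⟩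

end Binarisation


section GridHelpers

variable {n : ℕ} {m : Fin n → ℕ}

/-- `x + e j`, clamped (equals `x` when `x j = m j`). -/
noncomputable def bmp (x : GState m) (j : Fin n) : GState m :=
  Function.update x j ⟨min ((x j : ℕ) + 1) (m j), Nat.lt_succ_of_le (min_le_right _ _)⟩

lemma bmp_apply_ne (x : GState m) (j k : Fin n) (h : k ≠ j) : bmp x j k = x k :=
  Function.update_of_ne h _ _

lemma bmp_val (x : GState m) (j : Fin n) (h : (x j : ℕ) < m j) :
    ((bmp x j) j : ℕ) = (x j : ℕ) + 1 := by
  simp [bmp, Function.update_self]; omega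

lemma bmp_self (x : GState m) (j : Fin n) (h : (x j : ℕ) = m j) : bmp x j = x := by
  funext k
  by_cases hk : k = j
  · subst hk
    apply Fin.ext
    simp [bmp, Function.update_self]; omega
  · exact bmp_apply_ne x j k hk

lemma drop_apply_ne (x : GState m) (j k : Fin n) (h : k ≠ j) : drop m x j k = x k :=
  Function.update_of_ne h _ _

lemma drop_val (x : GState m) (j : Fin n) : ((drop m x j) j : ℕ) = (x j : ℕ) - 1 := by
  simp [drop, Function.update_self]

lemma drop_self (x : GState m) (j : Fin n) (h : (x j : ℕ) = 0) : drop m x j = x := by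
  funext k
  by_cases hk : k = j
  · subst hk
    apply Fin.ext
    simp [drop, Function.update_self, h]
  · exact drop_apply_ne x j k hk

lemma not_E_self (E : GState m → GState m → Prop) (hE : IsGridGraph m E)
    (x : GState m) : ¬ E x x := by
  intro h
  have := hE.1 x x h
  simp [dist1, Nat.dist_self] at this

lemma E_bmp_lt (E : GState m → GState m → Prop) (hE : IsGridGraph m E)
    {x : GState m} {j : Fin n} (h : E x (bmp x j)) : (x j : ℕ) < m j := by
  rcases lt_or_eq_of_le (Nat.lt_succ_iff.mp (x j).isLt) with h' | h'
  · exact h'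
  · exfalso
    rw [bmp_self x j h'] at h
    exact not_E_self E hE x h

lemma E_drop_pos (E : GState m → GState m → Prop) (hE : IsGridGraph m E)
    {x : GState m} {j : Fin n} (h : E x (drop m x j)) : 0 < (x j : ℕ) := by
  rcases Nat.eq_zero_or_pos (x j : ℕ) with h' | h'
  · exfalso
    rw [drop_self x j h'] at h
    exact not_E_self E hE x h
  · exact h'

lemma not_both (E : GState m → GState m → Prop) (hE : IsGridGraph m E)
    {x : GState m} {j : Fin n} (h1 : E x (bmp x j)) (h2 : E x (drop m x j)) : False := by
  have hlt := E_bmp_lt E hE h1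
  have hpos := E_drop_pos E hE h2
  have heq : bmp x j = drop m x j :=
    hE.2 x (bmp x j) (drop m x j) j h1 h2 (fun k hk => bmp_apply_ne x j k hk)
      (fun k hk => drop_apply_ne x j k hk)
  have h3 : ((bmp x j) j : ℕ) = ((drop m x j) j : ℕ) := by rw [heq]
  rw [bmp_val x j hlt, drop_val x j] at h3
  omega

lemma dist1_one {x x' : GState m} (h : dist1 m x x' = 1) :
    ∃ j, (∀ k, k ≠ j → x' k = x k) ∧ Nat.dist (x j : ℕ) (x' j : ℕ) = 1 := by
  unfold dist1 at h
  have hne : ∑ i, Nat.dist (x i : ℕ) (x' i : ℕ) ≠ 0 := by rw [h]; exact one_ne_zero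
  obtain ⟨j, _, hj⟩ := Finset.exists_ne_zero_of_sum_ne_zero hne
  refine ⟨j, fun k hk => ?_, ?_⟩
  · have hsum := Finset.add_sum_erase Finset.univ
      (fun i => Nat.dist (x i : ℕ) (x' i : ℕ)) (Finset.mem_univ j)
    rw [h] at hsum
    beta_reduce at hsum
    have hk0 : Nat.dist (x k : ℕ) (x' k : ℕ) = 0 := by
      have hmem : k ∈ Finset.univ.erase j := Finset.mem_erase.mpr ⟨hk, Finset.mem_univ k⟩
      have hle := Finset.single_le_sum
        (f := fun i => Nat.dist (x i : ℕ) (x' i : ℕ)) (fun i _ => Nat.zero_le _) hmem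
      beta_reduce at hle
      omega
    exact (Fin.ext (Nat.eq_of_dist_eq_zero hk0)).symm
  · have hsum := Finset.add_sum_erase Finset.univ
      (fun i => Nat.dist (x i : ℕ) (x' i : ℕ)) (Finset.mem_univ j)
    rw [h] at hsum
    beta_reduce at hsum
    omega

open Classical in
/-- The asymptotic function read off from a grid graph. -/
noncomputable def gridFun (E : GState m → GState m → Prop) : GState m → GState m :=
  fun x j =>
    if E x (bmp x j) then Fin.last (m j)
    else if E x (drop m x j) then 0
    else x j

end GridHelpers

/-- `f ↦ Γ(f)` is a bijection between asymptotic evolution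
functions and grid graphs: every grid graph is the state transition graph of a
unique asymptotic evolution function. -/
theorem grid_graph_unique_asymptotic
    {n : ℕ} {m : Fin n → ℕ} (E : GState m → GState m → Prop)
    (hE : IsGridGraph m E) :
    ∃! f : GState m → GState m, Asymptotic m f ∧ stgEdge m f = E := by
  classical
  refine ⟨gridFun E, ⟨?_, ?_⟩, ?_⟩
  · -- asymptotic
    intro x i
    unfold gridFun
    split_ifs with h1 h2
    · right; right; simp [Fin.last]
    · left; rfl
    · right; left; rfl
  · -- stgEdge (gridFun E) = E
    funext x x'
    apply propext
    constructor
    · rintro ⟨j, hoff, hc⟩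
      rcases hc with ⟨hlt, hx'⟩ | ⟨hlt, hx'⟩
      · -- up move
        unfold gridFun at hlt
        split_ifs at hlt with h1 h2
        · have hjm := E_bmp_lt E hE h1
          have : x' = bmp x j := by
            funext k
            by_cases hk : j = k
            · subst hk
              exact Fin.ext (by rw [bmp_val x j hjm, hx'])
            · rw [bmp_apply_ne x j k (fun h => hk h.symm)]
              exact hoff k (fun h => hk h.symm)
          rw [this]; exact h1
        · simp at hlt
        · omega
      · -- down move
        unfold gridFun at hlt
        split_ifs at hlt with h1 h2
        · exact absurd hlt (by simp [Fin.last]; omega)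
        · have hpos : 0 < (x j : ℕ) := by omega
          have : x' = drop m x j := by
            funext k
            by_cases hk : j = k
            · subst hk
              exact Fin.ext (by rw [drop_val x j]; omega)
            · rw [drop_apply_ne x j k (fun h => hk h.symm)]
              exact hoff k (fun h => hk h.symm)
          rw [this]; exact h2
        · omega
    · intro hxx'
      obtain ⟨j, hoff, hdj⟩ := dist1_one (hE.1 x x' hxx')
      have hdj' : (x' j : ℕ) = (x j : ℕ) + 1 ∨ (x' j : ℕ) + 1 = (x j : ℕ) := by
        simp [Nat.dist] at hdj; omega
      rcases hdj' with hup | hdown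
      · have hjm : (x j : ℕ) < m j := by
          have := Nat.lt_succ_iff.mp (x' j).isLt; omega
        have hx' : x' = bmp x j := by
          funext k
          by_cases hk : j = k
          · subst hk; exact Fin.ext (by rw [bmp_val x j hjm, hup])
          · rw [bmp_apply_ne x j k (fun h => hk h.symm)]
            exact hoff k (fun h => hk h.symm)
        have hEb : E x (bmp x j) := hx' ▸ hxx'
        refine ⟨j, hoff, Or.inl ⟨?_, hup⟩⟩
        unfold gridFun
        rw [if_pos hEb]
        show (x j : ℕ) < (Fin.last (m j) : ℕ)
        rw [Fin.val_last]; exact hjm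
      · have hx' : x' = drop m x j := by
          funext k
          by_cases hk : j = k
          · subst hk; exact Fin.ext (by rw [drop_val x j]; omega)
          · rw [drop_apply_ne x j k (fun h => hk h.symm)]
            exact hoff k (fun h => hk h.symm)
        have hEd : E x (drop m x j) := hx' ▸ hxx'
        have hnb : ¬ E x (bmp x j) := fun h => not_both E hE h hEd
        refine ⟨j, hoff, Or.inr ⟨?_, hdown⟩⟩
        unfold gridFun
        rw [if_neg hnb, if_pos hEd]
        simp; rw [Fin.lt_def, Fin.val_zero]; omega
  · -- uniqueness
    rintro g ⟨hga, hgE⟩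
    funext x j
    -- helper: analyze an edge from x whose target differs only at j
    have key : ∀ x' : GState m, E x x' → (∀ k, k ≠ j → x' k = x k) →
        ((x' j : ℕ) ≠ (x j : ℕ)) →
        (((x j : ℕ) < (g x j : ℕ) ∧ (x' j : ℕ) = (x j : ℕ) + 1) ∨
         ((g x j : ℕ) < (x j : ℕ) ∧ (x' j : ℕ) + 1 = (x j : ℕ))) := by
      intro x' hEx hoffx hne
      rw [← hgE] at hEx
      obtain ⟨j', hoff', hc⟩ := hEx
      have hj' : j' = j := by
        by_contra hj
        have := hoffx j' (fun h => hj h)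
        rcases hc with ⟨_, h⟩ | ⟨_, h⟩ <;> rw [this] at h <;> omega
      subst hj'
      exact hc
    apply Fin.ext
    rcases lt_trichotomy ((g x j : ℕ)) ((x j : ℕ)) with hlt | heq | hgt
    · -- g x j < x j : g x j = 0, edge down exists
      have hg0 : (g x j : ℕ) = 0 := by
        rcases hga x j with h | h | h
        · exact h
        · rw [h] at hlt; omega
        · have := Nat.lt_succ_iff.mp (x j).isLt; omega
      have hpos : 0 < (x j : ℕ) := by omega
      have hstg : stgEdge m g x (drop m x j) :=
        ⟨j, fun k hk => drop_apply_ne x j k hk,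
          Or.inr ⟨hlt, by rw [drop_val x j]; omega⟩⟩
      have hEd : E x (drop m x j) := by rw [← hgE]; exact hstg
      have hnb : ¬ E x (bmp x j) := fun h => not_both E hE h hEd
      unfold gridFun
      rw [if_neg hnb, if_pos hEd, hg0]
      simp
    · -- g x j = x j : no edges in direction j
      have hnb : ¬ E x (bmp x j) := by
        intro h
        have hjm := E_bmp_lt E hE h
        have := key (bmp x j) h (fun k hk => bmp_apply_ne x j k hk)
          (by rw [bmp_val x j hjm]; omega)
        omega
      have hnd : ¬ E x (drop m x j) := by
        intro h
        have hpos := E_drop_pos E hE h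
        have := key (drop m x j) h (fun k hk => drop_apply_ne x j k hk)
          (by rw [drop_val x j]; omega)
        omega
      unfold gridFun
      rw [if_neg hnb, if_neg hnd, heq]
    · -- x j < g x j : g x j = m j, edge up exists
      have hjm : (x j : ℕ) < m j := by
        have := Nat.lt_succ_iff.mp (g x j).isLt; omega
      have hstg : stgEdge m g x (bmp x j) :=
        ⟨j, fun k hk => bmp_apply_ne x j k hk,
          Or.inl ⟨hgt, bmp_val x j hjm⟩⟩
      have hEb : E x (bmp x j) := by rw [← hgE]; exact hstg
      have hgm : (g x j : ℕ) = m j := by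
        rcases hga x j with h | h | h
        · omega
        · rw [h] at hgt; omega
        · exact h
      unfold gridFun
      rw [if_pos hEb, hgm]
      simp [Fin.last]


end GRN
end

section
/- For an asymptotic evolution function f on M with binarisation 𝔹(f), ψ induces a graph homomorphism from Γ(𝔹(f)) to Γ(f): if x → x' is an edge of Γ(𝔹(f)) then ψ(x) → ψ(x') is an edge of Γ(f). -/
/-!
Common setup: multilevel discrete networks (Faure–Kaji, "A circuit-preserving
mapping from multilevel to Boolean dynamics").

A gene `i` takes levels in `{0,...,b i}`, encoded as `Fin (b i + 1)`.
The Boolean case is `b i = 1`.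
-/

namespace GRN

/-- `ψ` induces a graph homomorphism `Γ(𝔹(f)) → Γ(f)`. -/
theorem psi_graph_homomorphism
    {n : ℕ} {m : Fin n → ℕ} (f : GState m → GState m)
    (hf : Asymptotic m f) (x x' : BState m)
    (h : stgEdge (bOne m) (binf f) x x') :
    stgEdge m f (psi x) (psi x') := by
  obtain ⟨⟨i, k⟩, hoth, hcase⟩ := h
  refine ⟨i, ?_, ?_⟩
  · intro c hc
    apply Fin.ext
    show (∑ j : Fin (m c), (x' ⟨c, j⟩ : ℕ)) = ∑ j : Fin (m c), (x ⟨c, j⟩ : ℕ)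
    refine Finset.sum_congr rfl fun j _ => ?_
    rw [hoth ⟨c, j⟩ (fun h => hc (congrArg Sigma.fst h))]
  · rcases hcase with ⟨hlt, heq⟩ | ⟨hlt, heq⟩
    · have hfx : (psi x i : ℕ) < (f (psi x) i : ℕ) := by
        unfold binf at hlt
        split_ifs at hlt with h1 h2
        · exact h1
        · simp at hlt
        · exact absurd hlt (lt_irrefl _)
      refine Or.inl ⟨hfx, ?_⟩
      have key : ∀ j : Fin (m i), (x' ⟨i, j⟩ : ℕ) =
          (x ⟨i, j⟩ : ℕ) + if j = k then 1 else 0 := by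
        intro j
        by_cases hj : j = k
        · subst hj; simp [heq]
        · rw [hoth ⟨i, j⟩ (fun h => hj (eq_of_heq (Sigma.mk.inj_iff.mp h).2))]
          simp [hj]
      show (∑ j : Fin (m i), (x' ⟨i, j⟩ : ℕ)) = (∑ j : Fin (m i), (x ⟨i, j⟩ : ℕ)) + 1
      rw [Finset.sum_congr rfl fun j _ => key j, Finset.sum_add_distrib]
      simp
    · have hfx : (f (psi x) i : ℕ) < (psi x i : ℕ) := by
        unfold binf at hlt
        split_ifs at hlt with h1 h2
        · have : (x ⟨i, k⟩ : ℕ) < 2 := (x ⟨i, k⟩).isLt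
          simp only [Fin.val_one] at hlt
          omega
        · exact h2
        · exact absurd hlt (lt_irrefl _)
      refine Or.inr ⟨hfx, ?_⟩
      have key : ∀ j : Fin (m i), (x ⟨i, j⟩ : ℕ) =
          (x' ⟨i, j⟩ : ℕ) + if j = k then 1 else 0 := by
        intro j
        by_cases hj : j = k
        · subst hj; simp [← heq]
        · rw [hoth ⟨i, j⟩ (fun h => hj (eq_of_heq (Sigma.mk.inj_iff.mp h).2))]
          simp [hj]
      show (∑ j : Fin (m i), (x' ⟨i, j⟩ : ℕ)) + 1 = ∑ j : Fin (m i), (x ⟨i, j⟩ : ℕ)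
      rw [Finset.sum_congr rfl fun j _ => key j, Finset.sum_add_distrib]
      simp

end GRN
end

section
/- For an asymptotic evolution function f on M, if y → y' is an edge of Γ(f), then for every x ∈ ψ⁻¹(y) there exists x' ∈ ψ⁻¹(y') such that x → x' is an edge of Γ(𝔹(f)). -/
/-!
Common setup: multilevel discrete networks (Faure–Kaji, "A circuit-preserving
mapping from multilevel to Boolean dynamics").

A gene `i` takes levels in `{0,...,b i}`, encoded as `Fin (b i + 1)`.
The Boolean case is `b i = 1`.
-/

namespace GRN

section Helpers

variable {n : ℕ} {m : Fin n → ℕ}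

lemma psi_update_ne (x : BState m) (j : Fin n) (k : Fin (m j)) (v : Fin 2)
    (i : Fin n) (hij : i ≠ j) :
    (psi (Function.update x ⟨j, k⟩ v) i : ℕ) = (psi x i : ℕ) := by
  show (∑ l : Fin (m i), ((Function.update x ⟨j, k⟩ v) ⟨i, l⟩ : ℕ)) = _
  refine Finset.sum_congr rfl fun l _ => ?_
  rw [Function.update_of_ne]
  intro hcontra
  exact hij (congrArg Sigma.fst hcontra)

lemma psi_update_eq (x : BState m) (j : Fin n) (k : Fin (m j)) (v : Fin 2) :
    (psi (Function.update x ⟨j, k⟩ v) j : ℕ) + (x ⟨j, k⟩ : ℕ)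
      = (psi x j : ℕ) + (v : ℕ) := by
  have hfun : (fun l : Fin (m j) => ((Function.update x ⟨j, k⟩ v) ⟨j, l⟩ : ℕ))
      = Function.update (fun l : Fin (m j) => (x ⟨j, l⟩ : ℕ)) k (v : ℕ) := by
    funext l
    by_cases hl : l = k
    · subst hl; simp
    · rw [Function.update_of_ne hl, Function.update_of_ne]
      intro hcontra
      exact hl (by simpa using hcontra)
  show (∑ l : Fin (m j), ((Function.update x ⟨j, k⟩ v) ⟨j, l⟩ : ℕ)) + _ = (∑ l : Fin (m j), (x ⟨j, l⟩ : ℕ)) + _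
  rw [hfun, Finset.sum_update_of_mem (Finset.mem_univ k),
    ← Finset.add_sum_erase _ (fun l : Fin (m j) => (x ⟨j, l⟩ : ℕ)) (Finset.mem_univ k),
    Finset.sdiff_singleton_eq_erase]
  omega

end Helpers

/-- every edge of `Γ(f)` lifts through `ψ` at any point of the
fibre to an edge of `Γ(𝔹(f))`. -/
theorem edge_lifts_through_psi
    {n : ℕ} {m : Fin n → ℕ} (f : GState m → GState m)
    (hf : Asymptotic m f) (y y' : GState m)
    (h : stgEdge m f y y') :
    ∀ x : BState m, psi x = y →
      ∃ x' : BState m, psi x' = y' ∧ stgEdge (bOne m) (binf f) x x' := by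
  obtain ⟨j, hoff, hcase⟩ := h
  intro x hx
  subst hx
  rcases hcase with ⟨hlt, hy'⟩ | ⟨hlt, hy'⟩
  · -- increasing step: find a zero bit in block j
    have hsum : (psi x j : ℕ) < m j := by
      have hle : (f (psi x) j : ℕ) ≤ m j := Nat.lt_succ_iff.mp (f (psi x) j).isLt
      omega
    obtain ⟨k, hk⟩ : ∃ k : Fin (m j), (x ⟨j, k⟩ : ℕ) = 0 := by
      by_contra hc
      push_neg at hc
      have hall : ∀ k : Fin (m j), (x ⟨j, k⟩ : ℕ) = 1 := fun k =>
        le_antisymm (Nat.lt_succ_iff.mp (x ⟨j, k⟩).isLt)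
          (Nat.one_le_iff_ne_zero.mpr (hc k))
      have : (psi x j : ℕ) = m j := by
        show (∑ l : Fin (m j), (x ⟨j, l⟩ : ℕ)) = m j
        simp [hall]
      omega
    refine ⟨Function.update x ⟨j, k⟩ 1, ?_, ⟨⟨j, k⟩, ?_, ?_⟩⟩
    · funext i
      by_cases hij : i = j
      · subst hij
        have h1 := psi_update_eq x i k 1
        have h2 : (y' i : ℕ) = (psi x i : ℕ) + 1 := hy'
        exact Fin.ext (by simp at h1; omega)
      · exact Fin.ext (by rw [psi_update_ne x j k 1 i hij, hoff i hij])
    · intro p hp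
      exact Function.update_of_ne hp _ x
    · left
      have hb : binf f x ⟨j, k⟩ = 1 := by simp [binf, hlt]
      constructor
      · rw [hb, hk]
        show (0:ℕ) < (1 : Fin 2).val
        decide
      · rw [Function.update_self, hk]
        show ((1 : Fin 2) : ℕ) = 0 + 1
        decide
  · -- decreasing step: find a one bit in block j
    obtain ⟨k, hk⟩ : ∃ k : Fin (m j), (x ⟨j, k⟩ : ℕ) = 1 := by
      by_contra hc
      push_neg at hc
      have hall : ∀ k : Fin (m j), (x ⟨j, k⟩ : ℕ) = 0 := by
        intro k
        have h2 : (x ⟨j, k⟩ : ℕ) < 2 := (x ⟨j, k⟩).isLt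
        have := hc k
        omega
      have : (psi x j : ℕ) = 0 := by
        show (∑ l : Fin (m j), (x ⟨j, l⟩ : ℕ)) = 0
        simp [hall]
      omega
    refine ⟨Function.update x ⟨j, k⟩ 0, ?_, ⟨⟨j, k⟩, ?_, ?_⟩⟩
    · funext i
      by_cases hij : i = j
      · subst hij
        have h1 := psi_update_eq x i k 0
        have h2 : (y' i : ℕ) + 1 = (psi x i : ℕ) := hy'
        exact Fin.ext (by simp at h1; omega)
      · exact Fin.ext (by rw [psi_update_ne x j k 0 i hij, hoff i hij])
    · intro p hp
      exact Function.update_of_ne hp _ x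
    · right
      have hne : ¬ (psi x j : ℕ) < (f (psi x) j : ℕ) := by omega
      have hb : binf f x ⟨j, k⟩ = 0 := by simp [binf, hne, hlt]
      constructor
      · rw [hb, hk]; norm_num
      · rw [Function.update_self, hk]; norm_num

end GRN
end

section
/- Van Ham's embedding b₀ induces a graph homomorphism Γ(f) → Γ(𝔹(f)): if y → y' is an edge of Γ(f), then b₀(y) → b₀(y') is an edge of Γ(𝔹(f)). -/
/-!
Common setup: multilevel discrete networks (Faure–Kaji, "A circuit-preserving
mapping from multilevel to Boolean dynamics").

A gene `i` takes levels in `{0,...,b i}`, encoded as `Fin (b i + 1)`.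
The Boolean case is `b i = 1`.
-/

namespace GRN

lemma sum_indicator_lt {n c : ℕ} (h : c ≤ n) :
    ∑ j : Fin n, (if (j:ℕ) < c then 1 else 0) = c := by
  rw [Finset.sum_ite, Finset.sum_const, Finset.sum_const]
  simp only [smul_eq_mul, mul_one, mul_zero, add_zero]
  rw [← Fintype.card_subtype]
  have : Fintype.card {j : Fin n // (j:ℕ) < c} = Fintype.card (Fin c) :=
    Fintype.card_congr
      ⟨fun j => ⟨j, j.2⟩, fun j => ⟨⟨j, lt_of_lt_of_le j.2 h⟩, j.2⟩,
        fun j => rfl, fun j => rfl⟩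
  simpa using this

lemma psi_vanHam {n : ℕ} {m : Fin n → ℕ} (y : GState m) : psi (vanHam y) = y := by
  funext i
  apply Fin.ext
  show (∑ j : Fin (m i), ((vanHam y ⟨i, j⟩ : Fin 2) : ℕ)) = (y i : ℕ)
  have : ∀ j : Fin (m i), ((vanHam y ⟨i, j⟩ : Fin 2) : ℕ)
      = if (j : ℕ) < (y i : ℕ) then 1 else 0 := by
    intro j
    unfold vanHam
    split <;> rfl
  rw [Finset.sum_congr rfl fun j _ => this j]
  exact sum_indicator_lt (Nat.lt_succ_iff.mp (y i).isLt)

/-- Van Ham's embedding induces a graph homomorphism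
`Γ(f) → Γ(𝔹(f))`. -/
theorem vanHam_graph_homomorphism
    {n : ℕ} {m : Fin n → ℕ} (f : GState m → GState m)
    (hf : Asymptotic m f) (y y' : GState m)
    (h : stgEdge m f y y') :
    stgEdge (bOne m) (binf f) (vanHam y) (vanHam y') := by
  obtain ⟨j, hrest, hcase⟩ := h
  rcases hcase with ⟨hlt, hup⟩ | ⟨hlt, hdn⟩
  · -- increase at j; the flipped bit is position (y j) in block j
    have hyj : (y j : ℕ) < m j := by
      have := Nat.lt_succ_iff.mp (y' j).isLt
      omega
    refine ⟨⟨j, ⟨(y j : ℕ), hyj⟩⟩, ?_, Or.inl ?_⟩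
    · rintro ⟨i, k⟩ hk
      by_cases hij : i = j
      · subst hij
        have hk2 : (k : ℕ) ≠ (y i : ℕ) := by
          intro hc; apply hk; congr 1; exact Fin.ext hc
        unfold vanHam
        dsimp only
        rw [hup]
        by_cases hlt2 : (k : ℕ) < (y i : ℕ)
        · rw [if_pos hlt2, if_pos (by omega)]
        · rw [if_neg hlt2, if_neg (by omega)]
      · unfold vanHam
        dsimp only
        rw [hrest i hij]
    · constructor
      · unfold binf
        rw [psi_vanHam]
        show ((vanHam y ⟨j, ⟨(y j : ℕ), hyj⟩⟩ : Fin 2) : ℕ) <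
          ((if (y j : ℕ) < (f y j : ℕ) then 1
            else if (f y j : ℕ) < (y j : ℕ) then 0
            else vanHam y ⟨j, ⟨(y j : ℕ), hyj⟩⟩ : Fin 2) : ℕ)
        rw [if_pos hlt]
        unfold vanHam
        dsimp only
        rw [if_neg (lt_irrefl _)]
        norm_num
      · unfold vanHam
        dsimp only
        rw [hup]
        rw [if_pos (Nat.lt_succ_self _), if_neg (lt_irrefl _)]
        rfl
  · -- decrease at j; the flipped bit is position (y j - 1) in block j
    have hpos : 0 < (y j : ℕ) := by omega
    have hyj : (y j : ℕ) - 1 < m j := by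
      have := Nat.lt_succ_iff.mp (y j).isLt
      omega
    refine ⟨⟨j, ⟨(y j : ℕ) - 1, hyj⟩⟩, ?_, Or.inr ?_⟩
    · rintro ⟨i, k⟩ hk
      by_cases hij : i = j
      · subst hij
        have hk2 : (k : ℕ) ≠ (y i : ℕ) - 1 := by
          intro hc; apply hk; congr 1; exact Fin.ext hc
        unfold vanHam
        dsimp only
        by_cases hlt2 : (k : ℕ) < (y i : ℕ)
        · rw [if_pos hlt2, if_pos (by omega)]
        · rw [if_neg hlt2, if_neg (by omega)]
      · unfold vanHam
        dsimp only
        rw [hrest i hij]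
    · constructor
      · unfold binf
        rw [psi_vanHam]
        show ((if (y j : ℕ) < (f y j : ℕ) then 1
            else if (f y j : ℕ) < (y j : ℕ) then 0
            else vanHam y ⟨j, ⟨(y j : ℕ) - 1, hyj⟩⟩ : Fin 2) : ℕ) <
          ((vanHam y ⟨j, ⟨(y j : ℕ) - 1, hyj⟩⟩ : Fin 2) : ℕ)
        rw [if_neg (by omega), if_pos hlt]
        unfold vanHam
        dsimp only
        rw [if_pos (by omega)]
        norm_num
      · unfold vanHam
        dsimp only
        rw [if_pos (by omega : (y j : ℕ) - 1 < (y j : ℕ)),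
          if_neg (by omega : ¬ (y j : ℕ) - 1 < (y' j : ℕ))]
        rfl

end GRN
end

section
/- (Regulation preservation, direction 1) Let f be asymptotic on M and suppose Gf(y) contains a positive (resp. negative) edge i → i', i.e., ∂⁺ᵢf_{i'}(y) or ∂⁻ᵢf_{i'}(y) is positive (resp. negative). Then for every x ∈ ψ⁻¹(y) there exist indices j, j' such that G𝔹(f)(x) contains a positive (resp. negative) edge (i,j) → (i',j'). -/
/-!
Common setup: multilevel discrete networks (Faure–Kaji, "A circuit-preserving
mapping from multilevel to Boolean dynamics").

A gene `i` takes levels in `{0,...,b i}`, encoded as `Fin (b i + 1)`.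
The Boolean case is `b i = 1`.
-/

namespace GRN

section Aux

variable {n : ℕ} {m : Fin n → ℕ}

lemma psi_val (x : BState m) (i : Fin n) :
    (psi x i : ℕ) = ∑ j : Fin (m i), (x ⟨i, j⟩ : ℕ) := rfl

lemma bval_le (x : BState m) (p : BIdx m) : (x p : ℕ) ≤ 1 :=
  Nat.lt_succ_iff.mp (x p).isLt

lemma exists_zero {x : BState m} {i : Fin n} (h : (psi x i : ℕ) < m i) :
    ∃ j : Fin (m i), (x ⟨i, j⟩ : ℕ) = 0 := by
  by_contra hc
  push_neg at hc
  have h1 : ∀ j : Fin (m i), (x ⟨i, j⟩ : ℕ) = 1 := fun j => by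
    have := bval_le x ⟨i, j⟩; have := hc j; omega
  have : (psi x i : ℕ) = m i := by
    rw [psi_val, Finset.sum_congr rfl (fun j _ => h1 j)]
    simp
  omega

lemma exists_one {x : BState m} {i : Fin n} (h : 0 < (psi x i : ℕ)) :
    ∃ j : Fin (m i), (x ⟨i, j⟩ : ℕ) = 1 := by
  by_contra hc
  push_neg at hc
  have h1 : ∀ j : Fin (m i), (x ⟨i, j⟩ : ℕ) = 0 := fun j => by
    have := bval_le x ⟨i, j⟩; have := hc j; omega
  have : (psi x i : ℕ) = 0 := by
    rw [psi_val, Finset.sum_congr rfl (fun j _ => h1 j)]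
    simp
  omega

lemma psi_flip_eq {a a' : BState m} {i : Fin n} {j : Fin (m i)}
    (hoth : ∀ p : BIdx m, p ≠ ⟨i, j⟩ → a' p = a p) :
    (psi a' i : ℕ) + (a ⟨i, j⟩ : ℕ) = (psi a i : ℕ) + (a' ⟨i, j⟩ : ℕ) := by
  rw [psi_val, psi_val,
    ← Finset.sum_erase_add Finset.univ _ (Finset.mem_univ j),
    ← Finset.sum_erase_add Finset.univ (fun j'' => ((a ⟨i, j''⟩ : ℕ))) (Finset.mem_univ j)]
  have hsum : ∑ j'' ∈ Finset.univ.erase j, (a' ⟨i, j''⟩ : ℕ)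
      = ∑ j'' ∈ Finset.univ.erase j, (a ⟨i, j''⟩ : ℕ) := by
    refine Finset.sum_congr rfl fun j'' hj'' => ?_
    have hne : j'' ≠ j := (Finset.mem_erase.mp hj'').1
    rw [hoth ⟨i, j''⟩ (by simp [hne])]
  omega

lemma psi_flip_ne {a a' : BState m} {i : Fin n} {j : Fin (m i)}
    (hoth : ∀ p : BIdx m, p ≠ ⟨i, j⟩ → a' p = a p) {k : Fin n} (hk : k ≠ i) :
    (psi a' k : ℕ) = (psi a k : ℕ) := by
  rw [psi_val, psi_val]
  refine Finset.sum_congr rfl fun j'' _ => ?_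
  rw [hoth ⟨k, j''⟩ (fun h => hk (congrArg Sigma.fst h))]

lemma binf_val (f : GState m → GState m) (x : BState m) (p : BIdx m) :
    (binf f x p : ℕ) =
      if (psi x p.1 : ℕ) < (f (psi x) p.1 : ℕ) then 1
      else if (f (psi x) p.1 : ℕ) < (psi x p.1 : ℕ) then 0 else (x p : ℕ) := by
  unfold binf; split_ifs <;> rfl

lemma asym_nat (f : GState m → GState m) (hf : Asymptotic m f)
    (z : GState m) (i : Fin n) :
    (f z i : ℕ) = 0 ∨ (f z i : ℕ) = (z i : ℕ) ∨ (f z i : ℕ) = m i := by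
  rcases hf z i with h | h | h
  · exact Or.inl h
  · exact Or.inr (Or.inl (by rw [h]))
  · exact Or.inr (Or.inr h)

/-- core lemma, increasing case: flipping the boolean coordinate `(i,j)` from
`0` to `1` increases `f _ i'`, hence some boolean coordinate of block `i'`
of the binarisation increases. -/
lemma core_inc (f : GState m → GState m) (hf : Asymptotic m f)
    (a a' : BState m) (i i' : Fin n) (j : Fin (m i))
    (hoth : ∀ p : BIdx m, p ≠ ⟨i, j⟩ → a' p = a p)
    (h0 : (a ⟨i, j⟩ : ℕ) = 0) (h1 : (a' ⟨i, j⟩ : ℕ) = 1)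
    (huv : (f (psi a) i' : ℕ) < (f (psi a') i' : ℕ)) :
    ∃ j' : Fin (m i'), (binf f a ⟨i', j'⟩ : ℕ) = 0 ∧ (binf f a' ⟨i', j'⟩ : ℕ) = 1 := by
  have hflip := psi_flip_eq hoth
  have hu := asym_nat f hf (psi a) i'
  have hv := asym_nat f hf (psi a') i'
  have hub : (f (psi a) i' : ℕ) ≤ m i' := Nat.lt_succ_iff.mp (f (psi a) i').isLt
  have hvb : (f (psi a') i' : ℕ) ≤ m i' := Nat.lt_succ_iff.mp (f (psi a') i').isLt
  have hcb : (psi a i' : ℕ) ≤ m i' := Nat.lt_succ_iff.mp (psi a i').isLt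
  have hcb' : (psi a' i' : ℕ) ≤ m i' := Nat.lt_succ_iff.mp (psi a' i').isLt
  by_cases hii : i' = i
  · subst hii
    have hc' : (psi a' i' : ℕ) = (psi a i' : ℕ) + 1 := by omega
    refine ⟨j, ?_, ?_⟩
    · rw [binf_val]; dsimp only; split_ifs <;> omega
    · rw [binf_val]; dsimp only; split_ifs <;> omega
  · have hc : (psi a' i' : ℕ) = (psi a i' : ℕ) := psi_flip_ne hoth hii
    by_cases hcv : (psi a i' : ℕ) < (f (psi a') i' : ℕ)
    · -- c < v : binarisation at a' is 1 everywhere in block i'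
      obtain ⟨j', hj'⟩ := exists_zero (x := a) (i := i') (by omega)
      refine ⟨j', ?_, ?_⟩
      · rw [binf_val]; dsimp only; split_ifs <;> omega
      · rw [binf_val]; dsimp only; split_ifs <;> omega
    · -- v = c, u < c
      obtain ⟨j', hj'⟩ := exists_one (x := a) (i := i') (by omega)
      have ha' : (a' ⟨i', j'⟩ : ℕ) = (a ⟨i', j'⟩ : ℕ) := by
        rw [hoth ⟨i', j'⟩ (fun h => hii (congrArg Sigma.fst h))]
      refine ⟨j', ?_, ?_⟩
      · rw [binf_val]; dsimp only; split_ifs <;> omega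
      · rw [binf_val]; dsimp only; split_ifs <;> omega

/-- core lemma, decreasing case. -/
lemma core_dec (f : GState m → GState m) (hf : Asymptotic m f)
    (a a' : BState m) (i i' : Fin n) (j : Fin (m i))
    (hoth : ∀ p : BIdx m, p ≠ ⟨i, j⟩ → a' p = a p)
    (h0 : (a ⟨i, j⟩ : ℕ) = 0) (h1 : (a' ⟨i, j⟩ : ℕ) = 1)
    (huv : (f (psi a') i' : ℕ) < (f (psi a) i' : ℕ)) :
    ∃ j' : Fin (m i'), (binf f a ⟨i', j'⟩ : ℕ) = 1 ∧ (binf f a' ⟨i', j'⟩ : ℕ) = 0 := by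
  have hflip := psi_flip_eq hoth
  have hu := asym_nat f hf (psi a) i'
  have hv := asym_nat f hf (psi a') i'
  have hub : (f (psi a) i' : ℕ) ≤ m i' := Nat.lt_succ_iff.mp (f (psi a) i').isLt
  have hvb : (f (psi a') i' : ℕ) ≤ m i' := Nat.lt_succ_iff.mp (f (psi a') i').isLt
  have hcb : (psi a i' : ℕ) ≤ m i' := Nat.lt_succ_iff.mp (psi a i').isLt
  have hcb' : (psi a' i' : ℕ) ≤ m i' := Nat.lt_succ_iff.mp (psi a' i').isLt
  by_cases hii : i' = i
  · subst hii
    have hc' : (psi a' i' : ℕ) = (psi a i' : ℕ) + 1 := by omega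
    by_cases huc : (f (psi a) i' : ℕ) = (psi a i' : ℕ)
    · -- u = c ≥ 1
      obtain ⟨j', hj'⟩ := exists_one (x := a) (i := i') (by omega)
      refine ⟨j', ?_, ?_⟩
      · rw [binf_val]; dsimp only; split_ifs <;> omega
      · rw [binf_val]; dsimp only; split_ifs <;> omega
    · -- u = m i' > c
      have hum : (f (psi a) i' : ℕ) = m i' := by omega
      have hcu : (psi a i' : ℕ) < (f (psi a) i' : ℕ) := by omega
      by_cases hvz : (f (psi a') i' : ℕ) < (psi a' i' : ℕ)
      · refine ⟨j, ?_, ?_⟩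
        · rw [binf_val]; dsimp only; split_ifs <;> omega
        · rw [binf_val]; dsimp only; split_ifs <;> omega
      · -- v = c + 1 < m i'
        obtain ⟨j', hj'⟩ := exists_zero (x := a') (i := i') (by omega)
        refine ⟨j', ?_, ?_⟩
        · rw [binf_val]; dsimp only; split_ifs <;> omega
        · rw [binf_val]; dsimp only; split_ifs <;> omega
  · have hc : (psi a' i' : ℕ) = (psi a i' : ℕ) := psi_flip_ne hoth hii
    by_cases hcu : (psi a i' : ℕ) < (f (psi a) i' : ℕ)
    · obtain ⟨j', hj'⟩ := exists_zero (x := a') (i := i') (by omega)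
      refine ⟨j', ?_, ?_⟩
      · rw [binf_val]; dsimp only; split_ifs <;> omega
      · rw [binf_val]; dsimp only; split_ifs <;> omega
    · -- u = c > v
      obtain ⟨j', hj'⟩ := exists_one (x := a) (i := i') (by omega)
      have ha' : (a' ⟨i', j'⟩ : ℕ) = (a ⟨i', j'⟩ : ℕ) := by
        rw [hoth ⟨i', j'⟩ (fun h => hii (congrArg Sigma.fst h))]
      refine ⟨j', ?_, ?_⟩
      · rw [binf_val]; dsimp only; split_ifs <;> omega
      · rw [binf_val]; dsimp only; split_ifs <;> omega

end Aux

/-- regulation preservation, direction 1: a signed edge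
`i → i'` of `Gf(y)` gives, at every `x ∈ ψ⁻¹(y)`, a like-signed edge
`(i,j) → (i',j')` of `G𝔹(f)(x)` for some `j`, `j'`. -/
theorem regulation_preserving_forward
    {n : ℕ} {m : Fin n → ℕ} (f : GState m → GState m)
    (hf : Asymptotic m f) (y : GState m) (i i' : Fin n) (s : Bool)
    (h : SignedEdge m f y s i i') :
    ∀ x : BState m, psi x = y →
      ∃ (j : Fin (m i)) (j' : Fin (m i')),
        SignedEdge (bOne m) (binf f) x s ⟨i, j⟩ ⟨i', j'⟩ := by
  intro x hxy
  subst hxy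
  cases s with
  | false =>
    simp only [SignedEdge, if_neg Bool.false_ne_true] at h ⊢
    rcases h with ⟨hb, hlt⟩ | ⟨hpos, hlt⟩
    · -- ∂⁺ᵢ f_{i'} > 0
      obtain ⟨j, hj⟩ := exists_zero hb
      have hx1 : (x ⟨i, j⟩ : ℕ) < bOne m ⟨i, j⟩ := by simp [bOne]; omega
      set a' : BState m := bump (bOne m) x ⟨i, j⟩ hx1 with ha'
      have hoth : ∀ p : BIdx m, p ≠ ⟨i, j⟩ → a' p = x p := fun p hp =>
        Function.update_of_ne hp _ _
      have h1 : (a' ⟨i, j⟩ : ℕ) = 1 := by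
        simp only [ha', bump, Function.update_self]; omega
      have hpsi : psi a' = bump m (psi x) i hb := by
        funext k
        apply Fin.ext
        by_cases hk : k = i
        · subst hk
          have := psi_flip_eq hoth
          simp only [bump, Function.update_self]
          omega
        · rw [psi_flip_ne hoth hk]
          simp [bump, Function.update_of_ne hk]
      have hlt' : (f (psi x) i' : ℕ) < (f (psi a') i' : ℕ) := by rw [hpsi]; exact hlt
      obtain ⟨j', h0', h1'⟩ := core_inc f hf x a' i i' j hoth hj h1 hlt'
      exact ⟨j, j', Or.inl ⟨hx1, by
        show (binf f x ⟨i', j'⟩ : ℕ) < (binf f a' ⟨i', j'⟩ : ℕ); omega⟩⟩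
    · -- ∂⁻ᵢ f_{i'} > 0
      obtain ⟨j, hj⟩ := exists_one hpos
      set a : BState m := drop (bOne m) x ⟨i, j⟩ with ha
      have hoth : ∀ p : BIdx m, p ≠ ⟨i, j⟩ → x p = a p := fun p hp =>
        (Function.update_of_ne hp _ _).symm
      have h0 : (a ⟨i, j⟩ : ℕ) = 0 := by
        simp only [ha, drop, Function.update_self]; omega
      have hpsi : psi a = drop m (psi x) i := by
        funext k
        apply Fin.ext
        by_cases hk : k = i
        · subst hk
          have := psi_flip_eq hoth
          simp only [drop, Function.update_self]
          omega
        · rw [← psi_flip_ne hoth hk]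
          simp [drop, Function.update_of_ne hk]
      have hlt' : (f (psi a) i' : ℕ) < (f (psi x) i' : ℕ) := by rw [hpsi]; exact hlt
      obtain ⟨j', h0', h1'⟩ := core_inc f hf a x i i' j hoth h0 (by omega) hlt'
      exact ⟨j, j', Or.inr ⟨by omega, by
        show (binf f a ⟨i', j'⟩ : ℕ) < (binf f x ⟨i', j'⟩ : ℕ); omega⟩⟩
  | true =>
    simp only [SignedEdge, if_pos rfl] at h ⊢
    rcases h with ⟨hb, hlt⟩ | ⟨hpos, hlt⟩
    · obtain ⟨j, hj⟩ := exists_zero hb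
      have hx1 : (x ⟨i, j⟩ : ℕ) < bOne m ⟨i, j⟩ := by simp [bOne]; omega
      set a' : BState m := bump (bOne m) x ⟨i, j⟩ hx1 with ha'
      have hoth : ∀ p : BIdx m, p ≠ ⟨i, j⟩ → a' p = x p := fun p hp =>
        Function.update_of_ne hp _ _
      have h1 : (a' ⟨i, j⟩ : ℕ) = 1 := by
        simp only [ha', bump, Function.update_self]; omega
      have hpsi : psi a' = bump m (psi x) i hb := by
        funext k
        apply Fin.ext
        by_cases hk : k = i
        · subst hk
          have := psi_flip_eq hoth
          simp only [bump, Function.update_self]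
          omega
        · rw [psi_flip_ne hoth hk]
          simp [bump, Function.update_of_ne hk]
      have hlt' : (f (psi a') i' : ℕ) < (f (psi x) i' : ℕ) := by rw [hpsi]; exact hlt
      obtain ⟨j', h0', h1'⟩ := core_dec f hf x a' i i' j hoth hj h1 hlt'
      exact ⟨j, j', Or.inl ⟨hx1, by
        show (binf f a' ⟨i', j'⟩ : ℕ) < (binf f x ⟨i', j'⟩ : ℕ); omega⟩⟩
    · obtain ⟨j, hj⟩ := exists_one hpos
      set a : BState m := drop (bOne m) x ⟨i, j⟩ with ha
      have hoth : ∀ p : BIdx m, p ≠ ⟨i, j⟩ → x p = a p := fun p hp =>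
        (Function.update_of_ne hp _ _).symm
      have h0 : (a ⟨i, j⟩ : ℕ) = 0 := by
        simp only [ha, drop, Function.update_self]; omega
      have hpsi : psi a = drop m (psi x) i := by
        funext k
        apply Fin.ext
        by_cases hk : k = i
        · subst hk
          have := psi_flip_eq hoth
          simp only [drop, Function.update_self]
          omega
        · rw [← psi_flip_ne hoth hk]
          simp [drop, Function.update_of_ne hk]
      have hlt' : (f (psi x) i' : ℕ) < (f (psi a) i' : ℕ) := by rw [hpsi]; exact hlt
      obtain ⟨j', h0', h1'⟩ := core_dec f hf a x i i' j hoth h0 (by omega) hlt'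
      exact ⟨j, j', Or.inr ⟨by omega, by
        show (binf f x ⟨i', j'⟩ : ℕ) < (binf f a ⟨i', j'⟩ : ℕ); omega⟩⟩

end GRN
end
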